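/- The following relations among F-linear maps on V hold: K A*_L = q⁻² A*_L K, K B*_L = q² B*_L K, K A*_R = q⁻² A*_R K, K B*_R = q² B*_R K, K A_ℓ = q² A_ℓ K, K B_ℓ = q⁻² B_ℓ K, K A_r = q² A_r K, K B_r = q⁻² B_r K; A*_L A*_R = A*_R A*_L, B*_L B*_R = B*_R B*_L, A*_L B*_R = B*_R A*_L, B*_L A*_R = A*_R B*_L; A_ℓ A_r = A_r A_ℓ, B_ℓ B_r = B_r B_ℓ, A_ℓ B_r = B_r A_ℓ, B_ℓ A_r = A_r B_ℓ; A*_L B_r = B_r A*_L, B*_L A_r = A_r B*_L, A*_R B_ℓ = B_ℓ A*_R, B*_R A_ℓ = A_ℓ B*_R; A*_L B_ℓ = q⁻² B_ℓ A*_L, B*_L A_ℓ = q⁻² A_ℓ B*_L, A*_R B_r = q⁻² B_r A*_R, B*_R A_r = q⁻² A_r B*_R; A*_L A_ℓ − q² A_ℓ A*_L = I, A*_R A_r − q² A_r A*_R = I, B*_L B_ℓ − q² B_ℓ B*_L = I, B*_R B_r − q² B_r B*_R = I; A*_L A_r − A_r A*_L = K, B*_L B_r − B_r B*_L = K⁻¹,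 A*_R A_ℓ − A_ℓ A*_R = K, B*_R B_ℓ − B_ℓ B*_R = K⁻¹. -/

import Mathlib

noncomputable section
namespace SqPaper

/-- The two letters: `0 ↦ A`, `1 ↦ B`. -/
abbrev Ltr := Fin 2
def lA : Ltr := 0
def lB : Ltr := 1

/-- The pairing `⟨ , ⟩` on letters: `⟨A,A⟩=⟨B,B⟩=2`, `⟨A,B⟩=⟨B,A⟩=-2`. -/
def brk (x y : Ltr) : ℤ := if x = y then 2 else -2

variable (F : Type*) [Field F]

/-- The free algebra `V` on the two generators, realized as the monoid algebra of the
free monoid on two letters; the words form the standard basis. -/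
abbrev FA := MonoidAlgebra F (FreeMonoid Ltr)

/-- The standard basis vector attached to a word (list of letters). -/
def wd (l : List Ltr) : FA F := MonoidAlgebra.single (FreeMonoid.ofList l) 1

def Agen : FA F := wd F [lA]
def Bgen : FA F := wd F [lB]

/-- View an element of `V` as a finitely supported function on words. -/
def fsp (v : FA F) : FreeMonoid Ltr →₀ F := v.coeff

/-- The symmetric bilinear form on `V` for which the standard basis of words is orthonormal. -/
def form (u v : FA F) : F := (fsp F u).sum fun w c => c * (fsp F v) w

/-- Extend a function on words to an `F`-linear map on `V`. -/
def mkMap {M : Type*} [AddCommMonoid M] [Module F M] (f : List Ltr → M) :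
    FA F →ₗ[F] M :=
  Finsupp.lsum F (fun w => LinearMap.toSpanSingleton F M (f (FreeMonoid.toList w)))
    ∘ₗ (MonoidAlgebra.coeffLinearEquiv F).toLinearMap

/-- `[3]_q = (q³ - q⁻³)/(q - q⁻¹)`. -/
def tri (q : F) : F := (q ^ 3 - q⁻¹ ^ 3) / (q - q⁻¹)

/-- The q-shuffle product on words. -/
def shufW (q : F) : List Ltr → List Ltr → FA F
  | [], v => wd F v
  | u, [] => wd F u
  | a :: u, b :: v =>
      wd F [a] * shufW q u (b :: v) +
        (q ^ (((a :: u).map (fun x => brk x b)).sum)) • (wd F [b] * shufW q (a :: u) v)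
  termination_by u v => u.length + v.length

/-- The q-shuffle product `⋆` on `V`, as a bilinear map. -/
def qshuf (q : F) : FA F →ₗ[F] FA F →ₗ[F] FA F :=
  mkMap F fun u => mkMap F fun v => shufW F q u v

/-- Iterated `⋆`-product of the letters of a word. -/
def thetaW (q : F) : List Ltr → FA F
  | [] => 1
  | a :: t => qshuf F q (wd F [a]) (thetaW q t)

/-- `θ : V → V`, the algebra homomorphism from the free algebra to the q-shuffle algebra
with `θ(A) = A`, `θ(B) = B`. -/
def theta (q : F) : FA F →ₗ[F] FA F := mkMap F fun l => thetaW F q l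

/-- `A_L`, left multiplication by `A` in the free algebra. -/
def AL : FA F →ₗ[F] FA F := LinearMap.mulLeft F (Agen F)
def BL : FA F →ₗ[F] FA F := LinearMap.mulLeft F (Bgen F)
def AR : FA F →ₗ[F] FA F := LinearMap.mulRight F (Agen F)
def BR : FA F →ₗ[F] FA F := LinearMap.mulRight F (Bgen F)

/-- `X*_L` (for the letter `x`): deletes the letter `x` from the front of a word. -/
def delL (x : Ltr) : FA F →ₗ[F] FA F :=
  mkMap F fun l => if l.head? = some x then wd F l.tail else 0

/-- `X*_R` (for the letter `x`): deletes the letter `x` from the end of a word. -/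
def delR (x : Ltr) : FA F →ₗ[F] FA F :=
  mkMap F fun l => if l.getLast? = some x then wd F l.dropLast else 0

/-- `X_ℓ`: left q-shuffle multiplication by the letter `x`. -/
def shL (q : F) (x : Ltr) : FA F →ₗ[F] FA F := qshuf F q (wd F [x])

/-- `X_r`: right q-shuffle multiplication by the letter `x`. -/
def shR (q : F) (x : Ltr) : FA F →ₗ[F] FA F := (qshuf F q).flip (wd F [x])

/-- `X*_ℓ`: the weighted deletion map, deleting an occurrence of the letter `x`
with weight `q^{⟨v₁,x⟩+⋯+⟨v_{i-1},x⟩}`. -/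
def lowL (q : F) (x : Ltr) : FA F →ₗ[F] FA F :=
  mkMap F fun l =>
    ∑ i ∈ Finset.range l.length,
      if l[i]? = some x then
        (q ^ (((l.take i).map (fun y => brk y x)).sum)) • wd F (l.eraseIdx i)
      else 0

/-- `X*_r`: the weighted deletion map, deleting an occurrence of the letter `x`
with weight `q^{⟨vₙ,x⟩+⋯+⟨v_{i+1},x⟩}`. -/
def lowR (q : F) (x : Ltr) : FA F →ₗ[F] FA F :=
  mkMap F fun l =>
    ∑ i ∈ Finset.range l.length,
      if l[i]? = some x then
        (q ^ (((l.drop (i + 1)).map (fun y => brk y x)).sum)) • wd F (l.eraseIdx i)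
      else 0

/-- `K`, the algebra automorphism of the free algebra `V` with `K(A) = q²A`, `K(B) = q⁻²B`;
on a word `v = v₁⋯vₙ` it acts as `K(v) = v·q^{⟨v₁,A⟩+⋯+⟨vₙ,A⟩}`. -/
def Kop (q : F) : FA F →ₗ[F] FA F :=
  mkMap F fun l => (q ^ ((l.map (fun y => brk y lA)).sum)) • wd F l

/-- `K⁻¹`; on a word `v = v₁⋯vₙ` it acts as `K⁻¹(v) = v·q^{⟨v₁,B⟩+⋯+⟨vₙ,B⟩}`. -/
def Kinv (q : F) : FA F →ₗ[F] FA F :=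
  mkMap F fun l => (q ^ ((l.map (fun y => brk y lB)).sum)) • wd F l

/-- `T`, the automorphism of the free algebra swapping `A` and `B`. -/
def Top : FA F →ₗ[F] FA F :=
  mkMap F fun l => wd F (l.map (fun x => if x = lA then lB else lA))

/-- `Â = Q(A_L − K B_R)` and `B̂ = Q(B_L − K⁻¹ A_R)` where `Q = 1 - q²`. -/
def hatOp (q : F) (a : Ltr) : FA F →ₗ[F] FA F :=
  if a = lA then (1 - q ^ 2) • (AL F - Kop F q ∘ₗ BR F)
  else (1 - q ^ 2) • (BL F - Kinv F q ∘ₗ AR F)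

def phiW (q : F) : List Ltr → FA F
  | [] => 1
  | a :: t => hatOp F q a (phiW q t)

/-- The map `φ`: `φ(1) = 1` and `φ(v₁⋯vₙ) = v̂₁v̂₂⋯v̂ₙ(1)`. -/
def phi (q : F) : FA F →ₗ[F] FA F := mkMap F fun l => phiW F q l

/-- `ψ = K B_R A*_L + K⁻¹ A_R B*_L`. -/
def psi (q : F) : FA F →ₗ[F] FA F :=
  Kop F q ∘ₗ BR F ∘ₗ delL F lA + Kinv F q ∘ₗ AR F ∘ₗ delL F lB

/-- `V_n`, the span of the words of length `n`. -/
def Vn (n : ℕ) : Submodule F (FA F) :=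
  Submodule.span F { x | ∃ l : List Ltr, l.length = n ∧ x = wd F l }

/-- `J⁺ = A³B − [3]_q A²BA + [3]_q ABA² − BA³`. -/
def Jp (q : F) : FA F :=
  Agen F ^ 3 * Bgen F - tri F q • (Agen F ^ 2 * Bgen F * Agen F)
    + tri F q • (Agen F * Bgen F * Agen F ^ 2) - Bgen F * Agen F ^ 3

/-- `J⁻ = B³A − [3]_q B²AB + [3]_q BAB² − AB³`. -/
def Jm (q : F) : FA F :=
  Bgen F ^ 3 * Agen F - tri F q • (Bgen F ^ 2 * Agen F * Bgen F)
    + tri F q • (Bgen F * Agen F * Bgen F ^ 2) - Agen F * Bgen F ^ 3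

/-- `J`, the two-sided ideal of the free algebra generated by `J⁺` and `J⁻`
(realized as the `F`-span of the elements `a·J^±·b`). -/
def Jsub (q : F) : Submodule F (FA F) :=
  Submodule.span F { x | ∃ a b : FA F, x = a * Jp F q * b ∨ x = a * Jm F q * b }

/-- `U`, the subalgebra of the q-shuffle algebra `(V,⋆)` generated by `A` and `B`,
realized as the span of all `⋆`-products of the letters. -/
def Usub (q : F) : Submodule F (FA F) :=
  Submodule.span F (Set.range fun l : List Ltr => thetaW F q l)

/-- A `□_q`-module structure on an `F`-vector space `M`: four operators
`x₀, x₁, x₂, x₃` (indices mod 4) satisfying the q-Weyl and q-Serre relations. -/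
structure SqAct (q : F) (M : Type*) [AddCommGroup M] [Module F M] where
  x : ZMod 4 → Module.End F M
  weyl : ∀ i : ZMod 4,
    q • (x i * x (i + 1)) - q⁻¹ • (x (i + 1) * x i) = (q - q⁻¹) • (1 : Module.End F M)
  serre : ∀ i : ZMod 4,
    x i ^ 3 * x (i + 2) - tri F q • (x i ^ 2 * x (i + 2) * x i)
      + tri F q • (x i * x (i + 2) * x i ^ 2) - x (i + 2) * x i ^ 3 = 0

variable {F} {q : F} {M : Type*} [AddCommGroup M] [Module F M]

/-- A `□_q`-module `M` is generated by `ξ` if no proper submodule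
(subspace invariant under all the `xᵢ`) contains `ξ`. -/
def SqAct.Gen (S : SqAct F q M) (ξ : M) : Prop :=
  ∀ W : Submodule F M, (∀ i : ZMod 4, ∀ m ∈ W, S.x i m ∈ W) → ξ ∈ W → W = ⊤

/-- `W_n`: the span of the vectors `u₁u₂⋯uₙ·ξ` with each `uᵢ ∈ {x₀, x₂}`. -/
def SqAct.Wn (S : SqAct F q M) (ξ : M) (n : ℕ) : Submodule F M :=
  Submodule.span F
    { m | ∃ l : List (ZMod 4), l.length = n ∧ (∀ i ∈ l, i = 0 ∨ i = 2) ∧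
        m = l.foldr (fun i acc => S.x i acc) ξ }

end SqPaper
namespace SqPaper
variable {F : Type*} [Field F] (q : F)

lemma wd_mul (u v : List Ltr) : wd F u * wd F v = wd F (u ++ v) := by
  simp only [wd, MonoidAlgebra.single_mul_single, one_mul]; rfl

lemma mkMap_wd {M : Type*} [AddCommMonoid M] [Module F M] (f : List Ltr → M) (l : List Ltr) :
    mkMap F f (wd F l) = f l := by
  rw [mkMap, wd]
  simp [LinearMap.comp_apply, MonoidAlgebra.coeffLinearEquiv_apply, MonoidAlgebra.coeff_single,
    Finsupp.lsum_single, LinearMap.toSpanSingleton_apply, FreeMonoid.toList_ofList]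

lemma lext {M : Type*} [AddCommMonoid M] [Module F M] {f g : FA F →ₗ[F] M}
    (h : ∀ l : List Ltr, f (wd F l) = g (wd F l)) : f = g := by
  apply MonoidAlgebra.lhom_ext' (fun w => ?_)
  apply LinearMap.ext_ring
  have := h (FreeMonoid.toList w)
  simpa [wd] using this

end SqPaper
namespace SqPaper
variable {F : Type*} [Field F] (q : F)

/-- weight of a word against a letter -/
def wt (y : Ltr) (l : List Ltr) : ℤ := (l.map fun z => brk z y).sum

@[simp] lemma wt_nil (y : Ltr) : wt y [] = 0 := rfl
@[simp] lemma wt_cons (y a : Ltr) (l : List Ltr) : wt y (a :: l) = brk a y + wt y l := by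
  simp [wt]

lemma brk_comm (x y : Ltr) : brk x y = brk y x := by
  unfold brk; by_cases h : x = y
  · simp [h]
  · rw [if_neg h, if_neg fun e => h e.symm]

@[simp] lemma brk_same (x : Ltr) : brk x x = 2 := by simp [brk]
lemma brk_ne {x y : Ltr} (h : x ≠ y) : brk x y = -2 := by simp [brk, h]

def Kd (y : Ltr) : FA F →ₗ[F] FA F := mkMap F fun l => (q ^ (wt y l)) • wd F l

lemma Kop_eq_Kd : Kop F q = Kd q lA := rfl
lemma Kinv_eq_Kd : Kinv F q = Kd q lB := rfl

def epsc : FA F →ₗ[F] FA F := mkMap F fun l => if l = [] then 1 else 0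

@[simp] lemma wd_nil : wd F ([] : List Ltr) = 1 := rfl

-- word-level evaluations
lemma delL_wd (x : Ltr) (l : List Ltr) :
    delL F x (wd F l) = if l.head? = some x then wd F l.tail else 0 := mkMap_wd _ _
lemma delR_wd (x : Ltr) (l : List Ltr) :
    delR F x (wd F l) = if l.getLast? = some x then wd F l.dropLast else 0 := mkMap_wd _ _
lemma Kd_wd (y : Ltr) (l : List Ltr) :
    Kd q y (wd F l) = (q ^ (wt y l)) • wd F l := mkMap_wd _ _
lemma epsc_wd (l : List Ltr) :
    epsc (wd F l) = if l = [] then (1 : FA F) else 0 := mkMap_wd _ _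
lemma qshuf_wd (u v : List Ltr) :
    qshuf F q (wd F u) (wd F v) = shufW F q u v := by
  rw [qshuf, mkMap_wd]; exact mkMap_wd _ _
lemma shL_wd (x : Ltr) (l : List Ltr) :
    shL F q x (wd F l) = shufW F q [x] l := qshuf_wd q [x] l
lemma shR_wd (x : Ltr) (l : List Ltr) :
    shR F q x (wd F l) = shufW F q l [x] := qshuf_wd q l [x]

lemma shufW_nil_left (v : List Ltr) : shufW F q [] v = wd F v := by
  cases v <;> simp [shufW]
lemma shufW_nil_right (u : List Ltr) : shufW F q u [] = wd F u := by
  cases u <;> simp [shufW]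
lemma shufW_cons (a b : Ltr) (u v : List Ltr) :
    shufW F q (a :: u) (b :: v) = wd F [a] * shufW F q u (b :: v) +
      (q ^ (brk a b + wt b u)) • (wd F [b] * shufW F q (a :: u) v) := by
  rw [shufW]
  have : ((a :: u).map (fun z => brk z b)).sum = brk a b + wt b u := by
    simp [wt]
  rw [this]

lemma wd_cons (a : Ltr) (l : List Ltr) : wd F (a :: l) = wd F [a] * wd F l := by
  rw [wd_mul]; rfl

end SqPaper
namespace SqPaper
variable {F : Type*} [Field F] {q : F}

lemma lpt {f g : FA F →ₗ[F] FA F} (h : ∀ l : List Ltr, f (wd F l) = g (wd F l))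
    (v : FA F) : f v = g v := LinearMap.congr_fun (lext h) v

@[simp] lemma delL_one (x : Ltr) : delL F x (1 : FA F) = 0 := by
  rw [← wd_nil, delL_wd]; simp
@[simp] lemma delR_one (x : Ltr) : delR F x (1 : FA F) = 0 := by
  rw [← wd_nil, delR_wd]; simp
@[simp] lemma epsc_one : epsc (1 : FA F) = 1 := by
  rw [← wd_nil, epsc_wd]; simp
@[simp] lemma Kd_one (y : Ltr) : Kd q y (1 : FA F) = 1 := by
  rw [← wd_nil, Kd_wd]; simp
@[simp] lemma shL_one (x : Ltr) : shL F q x (1 : FA F) = wd F [x] := by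
  rw [← wd_nil, shL_wd, shufW_nil_right]
@[simp] lemma shR_one (x : Ltr) : shR F q x (1 : FA F) = wd F [x] := by
  rw [← wd_nil, shR_wd, shufW_nil_left]

lemma delL_mul (x a : Ltr) (v : FA F) :
    delL F x (wd F [a] * v) = if a = x then v else 0 := by
  have := lpt (f := delL F x ∘ₗ LinearMap.mulLeft F (wd F [a]))
      (g := if a = x then LinearMap.id else 0) (fun l => by
        by_cases h : a = x <;> simp [h, ← wd_cons, delL_wd]) v
  simpa [apply_ite (fun φ : FA F →ₗ[F] FA F => φ v)] using this

lemma epsc_mul (a : Ltr) (v : FA F) : epsc (wd F [a] * v) = 0 := by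
  have := lpt (f := epsc ∘ₗ LinearMap.mulLeft F (wd F [a])) (g := 0)
      (fun l => by simp [← wd_cons, epsc_wd]) v
  simpa using this

lemma delR_mul (x a : Ltr) (v : FA F) :
    delR F x (wd F [a] * v)
      = wd F [a] * delR F x v + (if a = x then epsc v else 0) := by
  have := lpt (f := delR F x ∘ₗ LinearMap.mulLeft F (wd F [a]))
      (g := LinearMap.mulLeft F (wd F [a]) ∘ₗ delR F x
        + (if a = x then epsc else 0)) (fun l => by
        simp only [LinearMap.comp_apply, LinearMap.add_apply, LinearMap.mulLeft_apply,
          apply_ite (fun φ : FA F →ₗ[F] FA F => φ (wd F l)), LinearMap.zero_apply]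
        match l with
        | [] =>
          by_cases h : a = x <;> simp [wd_mul, delR_wd, epsc_wd, h]
        | b :: t =>
          rw [wd_mul, delR_wd, delR_wd, epsc_wd]
          simp only [List.singleton_append, List.getLast?_cons_cons, List.cons_ne_nil,
            if_false, add_zero, mul_ite, mul_zero, List.dropLast_cons₂]
          split <;> simp [wd_mul]) v
  simpa [apply_ite (fun φ : FA F →ₗ[F] FA F => φ v)] using this

set_option maxRecDepth 4000 in
lemma Kd_mul (hq : q ≠ 0) (y a : Ltr) (v : FA F) :
    Kd q y (wd F [a] * v) = (q ^ (brk a y)) • (wd F [a] * Kd q y v) := by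
  have := lpt (f := Kd q y ∘ₗ LinearMap.mulLeft F (wd F [a]))
      (g := (q ^ (brk a y)) • (LinearMap.mulLeft F (wd F [a]) ∘ₗ Kd q y)) (fun l => by
        simp only [LinearMap.comp_apply, LinearMap.smul_apply, LinearMap.mulLeft_apply]
        rw [wd_mul, Kd_wd, Kd_wd, mul_smul_comm, smul_smul, wd_mul]
        simp only [List.singleton_append, wt_cons, zpow_add₀ hq]) v
  simpa only [LinearMap.comp_apply, LinearMap.smul_apply, LinearMap.mulLeft_apply] using this

lemma shL_mul (x a : Ltr) (v : FA F) :
    shL F q x (wd F [a] * v)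
      = wd F [x] * (wd F [a] * v) + (q ^ (brk x a)) • (wd F [a] * shL F q x v) := by
  have := lpt (f := shL F q x ∘ₗ LinearMap.mulLeft F (wd F [a]))
      (g := LinearMap.mulLeft F (wd F [x]) ∘ₗ LinearMap.mulLeft F (wd F [a])
        + (q ^ (brk x a)) • (LinearMap.mulLeft F (wd F [a]) ∘ₗ shL F q x)) (fun l => by
        simp only [LinearMap.comp_apply, LinearMap.add_apply, LinearMap.smul_apply,
          LinearMap.mulLeft_apply]
        rw [wd_mul]
        simp only [List.singleton_append]
        rw [shL_wd, shL_wd, shufW_cons, shufW_nil_left]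
        simp [wd_mul]) v
  simpa using this

set_option maxRecDepth 4000 in
lemma shR_mul (hq : q ≠ 0) (x a : Ltr) (v : FA F) :
    shR F q x (wd F [a] * v)
      = wd F [a] * shR F q x v + (q ^ (brk a x)) • (wd F [x] * (wd F [a] * Kd q x v)) := by
  have := lpt (f := shR F q x ∘ₗ LinearMap.mulLeft F (wd F [a]))
      (g := LinearMap.mulLeft F (wd F [a]) ∘ₗ shR F q x
        + (q ^ (brk a x)) • (LinearMap.mulLeft F (wd F [x]) ∘ₗ LinearMap.mulLeft F (wd F [a])
            ∘ₗ Kd q x)) (fun l => by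
        simp only [LinearMap.comp_apply, LinearMap.add_apply, LinearMap.smul_apply,
          LinearMap.mulLeft_apply]
        rw [wd_mul]
        simp only [List.singleton_append]
        rw [shR_wd, shR_wd, Kd_wd, shufW_cons, shufW_nil_right]
        rw [mul_smul_comm, mul_smul_comm, smul_smul, wd_mul, wd_mul, wd_mul]
        simp only [List.singleton_append, zpow_add₀ hq]) v
  simpa only [LinearMap.comp_apply, LinearMap.add_apply, LinearMap.smul_apply,
    LinearMap.mulLeft_apply] using this

lemma epsc_shL (x : Ltr) (v : FA F) : epsc (shL F q x v) = 0 := by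
  have := lpt (f := epsc ∘ₗ shL F q x) (g := 0) (fun l => by
      simp only [LinearMap.comp_apply, LinearMap.zero_apply]
      match l with
      | [] => rw [shL_wd, shufW_nil_right, epsc_wd]; simp
      | b :: t =>
        rw [shL_wd, shufW_cons]
        simp [epsc_mul]) v
  simpa using this

lemma epsc_shR (x : Ltr) (v : FA F) : epsc (shR F q x v) = 0 := by
  have := lpt (f := epsc ∘ₗ shR F q x) (g := 0) (fun l => by
      simp only [LinearMap.comp_apply, LinearMap.zero_apply]
      match l with
      | [] => rw [shR_wd, shufW_nil_left, epsc_wd]; simp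
      | b :: t =>
        rw [shR_wd, shufW_cons]
        simp [epsc_mul, ← wd_cons]) v
  simpa using this

end SqPaper
namespace SqPaper
variable {F : Type*} [Field F] {q : F}

lemma wt_getLast (y x : Ltr) : ∀ l : List Ltr, l.getLast? = some x →
    wt y l = wt y l.dropLast + brk x y := by
  intro l
  induction l with
  | nil => simp
  | cons a t ih =>
    cases t with
    | nil =>
      intro h; simp only [List.getLast?_singleton, Option.some.injEq] at h
      subst h; simp [brk_comm]
    | cons b s =>
      intro h
      rw [List.getLast?_cons_cons] at h
      simp only [List.dropLast_cons₂, wt_cons, ih h]; ring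

lemma Kd_delL (hq : q ≠ 0) (y x : Ltr) :
    Kd q y ∘ₗ delL F x = (q ^ (-(brk x y))) • (delL F x ∘ₗ Kd q y) := by
  apply lext; intro l
  simp only [LinearMap.comp_apply, LinearMap.smul_apply]
  match l with
  | [] => simp [delL_wd, Kd_wd]
  | a :: t =>
    rw [delL_wd, Kd_wd, map_smul, delL_wd]
    simp only [List.head?_cons, List.tail_cons, Option.some.injEq]
    by_cases h : a = x
    · subst h
      rw [if_pos rfl, Kd_wd, wt_cons, smul_smul, ← zpow_add₀ hq,
        show -brk a y + (brk a y + wt y t) = wt y t by ring]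
    · simp [h]

lemma Kd_delR (hq : q ≠ 0) (y x : Ltr) :
    Kd q y ∘ₗ delR F x = (q ^ (-(brk x y))) • (delR F x ∘ₗ Kd q y) := by
  apply lext; intro l
  simp only [LinearMap.comp_apply, LinearMap.smul_apply]
  rw [delR_wd, Kd_wd, map_smul, delR_wd]
  by_cases h : l.getLast? = some x
  · rw [if_pos h, Kd_wd, wt_getLast y x l h, smul_smul, ← zpow_add₀ hq,
      show -brk x y + (wt y l.dropLast + brk x y) = wt y l.dropLast by ring]
  · simp [h]

lemma Kd_shL (hq : q ≠ 0) (y x : Ltr) :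
    Kd q y ∘ₗ shL F q x = (q ^ (brk x y)) • (shL F q x ∘ₗ Kd q y) := by
  apply lext; intro l
  simp only [LinearMap.comp_apply, LinearMap.smul_apply]
  induction l with
  | nil => simp [Kd_wd, wt]
  | cons a t ih =>
    rw [wd_cons]
    simp only [shL_mul, Kd_mul hq, map_add, map_smul, smul_add, mul_smul_comm,
      smul_smul, Kd_wd]
    rw [ih]
    simp only [map_smul, shL_mul, Kd_wd, mul_smul_comm, smul_smul, smul_add, zpow_add₀ hq]
    module

lemma Kd_shR (hq : q ≠ 0) (y x : Ltr) :
    Kd q y ∘ₗ shR F q x = (q ^ (brk x y)) • (shR F q x ∘ₗ Kd q y) := by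
  apply lext; intro l
  simp only [LinearMap.comp_apply, LinearMap.smul_apply]
  induction l with
  | nil => simp [Kd_wd, wt]
  | cons a t ih =>
    rw [wd_cons]
    simp only [shR_mul hq, Kd_mul hq, map_add, map_smul, smul_add, mul_smul_comm,
      smul_smul, Kd_wd]
    rw [ih]
    simp only [map_smul, shR_mul hq, Kd_mul hq, Kd_wd, mul_smul_comm, smul_smul,
      smul_add, zpow_add₀ hq]
    module

end SqPaper
namespace SqPaper
variable {F : Type*} [Field F] {q : F}

lemma delL_delR (x y : Ltr) : delL F x ∘ₗ delR F y = delR F y ∘ₗ delL F x := by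
  apply lext; intro l
  simp only [LinearMap.comp_apply]
  match l with
  | [] => simp [delL_wd, delR_wd]
  | [a] =>
    by_cases hax : a = x <;> by_cases hay : a = y <;>
      (try simp [delL_wd, delR_wd, hax, hay]) <;> (try split_ifs) <;>
      simp [delL_wd, delR_wd]
  | a :: b :: t =>
    simp only [delL_wd, delR_wd, List.getLast?_cons_cons, List.dropLast_cons₂,
      List.head?_cons, List.tail_cons, Option.some.injEq,
      apply_ite (delL F x), apply_ite (delR F y), map_zero]
    split_ifs <;> rfl

lemma delL_shR (hq : q ≠ 0) (x y : Ltr) :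
    delL F x ∘ₗ shR F q y = shR F q y ∘ₗ delL F x + (if x = y then Kd q x else 0) := by
  apply lext; intro l
  simp only [LinearMap.comp_apply, LinearMap.add_apply,
    apply_ite (fun φ : FA F →ₗ[F] FA F => φ (delL F x (wd F l))), LinearMap.zero_apply,
    apply_ite (fun φ : FA F →ₗ[F] FA F => φ (wd F l))]
  match l with
  | [] =>
    by_cases h : x = y <;>
      simp [h, wd_nil, delL_wd, delL_one, Kd_one, eq_comm (a := y) (b := x)]
  | a :: t =>
    rw [wd_cons, shR_mul hq, map_add, map_smul, delL_mul, delL_mul, delL_mul, Kd_mul hq]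
    by_cases hxy : x = y
    · subst hxy
      by_cases hax : a = x <;>
        simp [hax, Kd_wd, smul_smul, ← zpow_add₀ hq, brk_comm x a, ← wd_cons]
    · by_cases hax : a = x <;>
        simp [hax, Ne.symm hxy, hxy]

lemma delL_shL (hq : q ≠ 0) (x y : Ltr) :
    delL F x ∘ₗ shL F q y
      = (q ^ (brk x y)) • (shL F q y ∘ₗ delL F x) + (if x = y then LinearMap.id else 0) := by
  apply lext; intro l
  simp only [LinearMap.comp_apply, LinearMap.add_apply, LinearMap.smul_apply,
    apply_ite (fun φ : FA F →ₗ[F] FA F => φ (wd F l)), LinearMap.zero_apply,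
    LinearMap.id_apply]
  match l with
  | [] =>
    by_cases h : x = y <;>
      simp [h, wd_nil, delL_wd, delL_one, eq_comm (a := y) (b := x)]
  | a :: t =>
    rw [wd_cons, shL_mul, map_add, map_smul, delL_mul, delL_mul, delL_mul]
    by_cases hxy : x = y
    · subst hxy
      by_cases hax : a = x <;>
        simp [hax, smul_smul, ← zpow_add₀ hq, brk_comm x a, ← wd_cons, eq_comm (a := x),
          add_comm]
    · by_cases hax : a = x <;>
        simp [hax, Ne.symm hxy, hxy, brk_comm x y]

end SqPaper
namespace SqPaper
variable {F : Type*} [Field F] {q : F}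

lemma Kd_shL_pt (hq : q ≠ 0) (y x : Ltr) (v : FA F) :
    Kd q y (shL F q x v) = q ^ (brk x y) • shL F q x (Kd q y v) := by
  simpa using LinearMap.congr_fun (Kd_shL hq y x) v

lemma shL_epsc (y : Ltr) (v : FA F) : shL F q y (epsc v) = wd F [y] * epsc v := by
  have := lpt (f := shL F q y ∘ₗ epsc) (g := LinearMap.mulLeft F (wd F [y]) ∘ₗ epsc)
      (fun l => by
        match l with
        | [] => simp [epsc_wd]
        | a :: t => simp [epsc_wd]) v
  simpa using this

lemma shR_epsc (y : Ltr) (v : FA F) : shR F q y (epsc v) = wd F [y] * epsc v := by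
  have := lpt (f := shR F q y ∘ₗ epsc) (g := LinearMap.mulLeft F (wd F [y]) ∘ₗ epsc)
      (fun l => by
        match l with
        | [] => simp [epsc_wd]
        | a :: t => simp [epsc_wd]) v
  simpa using this

lemma epsc_Kd (y : Ltr) (v : FA F) : epsc (Kd q y v) = epsc v := by
  have := lpt (f := epsc ∘ₗ Kd q y) (g := epsc) (fun l => by
      match l with
      | [] => simp [epsc_wd, Kd_wd]
      | a :: t => simp [epsc_wd, Kd_wd]) v
  simpa using this

lemma shL_shR (hq : q ≠ 0) (x y : Ltr) :
    shL F q x ∘ₗ shR F q y = shR F q y ∘ₗ shL F q x := by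
  apply lext; intro l
  simp only [LinearMap.comp_apply]
  induction l with
  | nil => simp only [wd_nil, shL_one, shR_one, shL_wd, shR_wd]
  | cons a t ih =>
    rw [wd_cons]
    simp only [shL_mul, shR_mul hq, Kd_mul hq, Kd_wd, Kd_shL_pt hq, map_add, map_smul,
      smul_add, mul_add, mul_smul_comm, smul_smul]
    rw [ih]
    try simp only [zpow_add₀ hq]
    module

lemma delR_shL (hq : q ≠ 0) (x y : Ltr) :
    delR F x ∘ₗ shL F q y = shL F q y ∘ₗ delR F x + (if x = y then Kd q x else 0) := by
  apply lext; intro l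
  simp only [LinearMap.comp_apply, LinearMap.add_apply,
    apply_ite (fun φ : FA F →ₗ[F] FA F => φ (wd F l)), LinearMap.zero_apply]
  induction l with
  | nil =>
    by_cases h : x = y <;>
      simp [h, wd_nil, shL_one, delR_wd, Kd_one, eq_comm (a := y) (b := x)]
  | cons a t ih =>
    rw [wd_cons]
    simp only [shL_mul, delR_mul, epsc_mul, epsc_shL, map_add, map_smul, smul_add,
      mul_add, mul_smul_comm, smul_smul, Kd_mul hq, Kd_wd, shL_epsc,
      apply_ite (fun φ : FA F →ₗ[F] FA F => φ (wd F t))]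
    rw [ih]
    simp only [mul_add, mul_ite, mul_zero, smul_add, smul_ite, smul_zero, add_zero, ite_self,
      apply_ite (shL F q y), map_zero, shL_epsc, Kd_wd, mul_smul_comm, smul_smul]
    by_cases hxy : x = y
    · subst hxy
      simp only [reduceIte]
      simp only [brk_comm]
      module
    · simp only [if_neg hxy, add_zero]
      module

lemma epsc_smul_wt (y : Ltr) (t : List Ltr) (c : F) (w : FA F) :
    (c * q ^ wt y t) • (w * epsc (wd F t)) = c • (w * epsc (wd F t)) := by
  cases t <;> simp [epsc_wd, wt]

lemma delR_shR (hq : q ≠ 0) (x y : Ltr) :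
    delR F x ∘ₗ shR F q y
      = (q ^ (brk x y)) • (shR F q y ∘ₗ delR F x) + (if x = y then LinearMap.id else 0) := by
  apply lext; intro l
  simp only [LinearMap.comp_apply, LinearMap.add_apply, LinearMap.smul_apply,
    apply_ite (fun φ : FA F →ₗ[F] FA F => φ (wd F l)), LinearMap.zero_apply, LinearMap.id_apply]
  induction l with
  | nil =>
    by_cases h : x = y <;>
      simp [h, wd_nil, shR_one, delR_wd, eq_comm (a := y) (b := x)]
  | cons a t ih =>
    rw [wd_cons]
    simp only [shR_mul hq, delR_mul, epsc_mul, epsc_shR, epsc_Kd, map_add, map_smul, smul_add,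
      mul_add, mul_smul_comm, smul_smul, Kd_mul hq, Kd_wd, shR_epsc, mul_ite, mul_zero,
      smul_ite, smul_zero, add_zero, ite_self, apply_ite (shR F q y), map_zero]
    rw [ih, delR_wd]
    by_cases hgl : t.getLast? = some x
    · have ht : t ≠ [] := by rintro rfl; simp at hgl
      simp only [if_pos hgl, Kd_wd, epsc_wd, if_neg ht, wt_getLast y x t hgl, zpow_add₀ hq,
        mul_ite, mul_zero, mul_add, smul_ite, smul_zero, smul_add, mul_smul_comm, smul_smul,
        map_zero, map_smul, add_zero, ite_self]
      by_cases hxy : x = y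
      · simp only [hxy, reduceIte]; module
      · simp only [if_neg hxy, add_zero]; module
    · simp only [if_neg hgl, mul_zero, smul_zero, zero_add, add_zero, map_zero, mul_ite,
        smul_ite, smul_zero, ite_self]
      by_cases hax : a = x
      · simp only [hax, reduceIte, epsc_smul_wt]
        by_cases hxy : x = y
        · simp only [hxy, reduceIte]; module
        · simp only [if_neg hxy, add_zero]; module
      · simp only [if_neg hax, add_zero]
        by_cases hxy : x = y
        · simp only [hxy, reduceIte]; module
        · simp only [if_neg hxy, add_zero]; try module

end SqPaper
namespace SqPaper
variable {F : Type*} [Field F]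

lemma pow_pos2 (q : F) : q ^ ((2:ℤ)) = q ^ 2 := by
  rw [show ((2:ℤ)) = ((2:ℕ):ℤ) by norm_num, zpow_natCast]

lemma pow_neg2 (q : F) : q ^ (-(2:ℤ)) = q⁻¹ ^ 2 := by
  rw [zpow_neg, inv_pow, pow_pos2]

lemma hAB : lA ≠ lB := by decide
lemma hBA : lB ≠ lA := by decide

end SqPaper

open SqPaper in
/-- the relations among `K, K⁻¹, A*_L, B*_L, A*_R, B*_R, A_ℓ, B_ℓ, A_r, B_r`. -/
theorem relations_maplist_one (F : Type*) [Field F] (q : F) (hq : q ≠ 0)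
    (hq1 : ∀ k : ℕ, 0 < k → q ^ k ≠ 1) :
    Kop F q ∘ₗ delL F lA = q⁻¹ ^ 2 • (delL F lA ∘ₗ Kop F q) ∧
    Kop F q ∘ₗ delL F lB = q ^ 2 • (delL F lB ∘ₗ Kop F q) ∧
    Kop F q ∘ₗ delR F lA = q⁻¹ ^ 2 • (delR F lA ∘ₗ Kop F q) ∧
    Kop F q ∘ₗ delR F lB = q ^ 2 • (delR F lB ∘ₗ Kop F q) ∧
    Kop F q ∘ₗ shL F q lA = q ^ 2 • (shL F q lA ∘ₗ Kop F q) ∧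
    Kop F q ∘ₗ shL F q lB = q⁻¹ ^ 2 • (shL F q lB ∘ₗ Kop F q) ∧
    Kop F q ∘ₗ shR F q lA = q ^ 2 • (shR F q lA ∘ₗ Kop F q) ∧
    Kop F q ∘ₗ shR F q lB = q⁻¹ ^ 2 • (shR F q lB ∘ₗ Kop F q) ∧
    delL F lA ∘ₗ delR F lA = delR F lA ∘ₗ delL F lA ∧
    delL F lB ∘ₗ delR F lB = delR F lB ∘ₗ delL F lB ∧
    delL F lA ∘ₗ delR F lB = delR F lB ∘ₗ delL F lA ∧
    delL F lB ∘ₗ delR F lA = delR F lA ∘ₗ delL F lB ∧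
    shL F q lA ∘ₗ shR F q lA = shR F q lA ∘ₗ shL F q lA ∧
    shL F q lB ∘ₗ shR F q lB = shR F q lB ∘ₗ shL F q lB ∧
    shL F q lA ∘ₗ shR F q lB = shR F q lB ∘ₗ shL F q lA ∧
    shL F q lB ∘ₗ shR F q lA = shR F q lA ∘ₗ shL F q lB ∧
    delL F lA ∘ₗ shR F q lB = shR F q lB ∘ₗ delL F lA ∧
    delL F lB ∘ₗ shR F q lA = shR F q lA ∘ₗ delL F lB ∧
    delR F lA ∘ₗ shL F q lB = shL F q lB ∘ₗ delR F lA ∧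
    delR F lB ∘ₗ shL F q lA = shL F q lA ∘ₗ delR F lB ∧
    delL F lA ∘ₗ shL F q lB = q⁻¹ ^ 2 • (shL F q lB ∘ₗ delL F lA) ∧
    delL F lB ∘ₗ shL F q lA = q⁻¹ ^ 2 • (shL F q lA ∘ₗ delL F lB) ∧
    delR F lA ∘ₗ shR F q lB = q⁻¹ ^ 2 • (shR F q lB ∘ₗ delR F lA) ∧
    delR F lB ∘ₗ shR F q lA = q⁻¹ ^ 2 • (shR F q lA ∘ₗ delR F lB) ∧
    delL F lA ∘ₗ shL F q lA - q ^ 2 • (shL F q lA ∘ₗ delL F lA) = LinearMap.id ∧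
    delR F lA ∘ₗ shR F q lA - q ^ 2 • (shR F q lA ∘ₗ delR F lA) = LinearMap.id ∧
    delL F lB ∘ₗ shL F q lB - q ^ 2 • (shL F q lB ∘ₗ delL F lB) = LinearMap.id ∧
    delR F lB ∘ₗ shR F q lB - q ^ 2 • (shR F q lB ∘ₗ delR F lB) = LinearMap.id ∧
    delL F lA ∘ₗ shR F q lA - shR F q lA ∘ₗ delL F lA = Kop F q ∧
    delL F lB ∘ₗ shR F q lB - shR F q lB ∘ₗ delL F lB = Kinv F q ∧
    delR F lA ∘ₗ shL F q lA - shL F q lA ∘ₗ delR F lA = Kop F q ∧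
    delR F lB ∘ₗ shL F q lB - shL F q lB ∘ₗ delR F lB = Kinv F q := by
  clear hq1
  refine ⟨?_, ?_, ?_, ?_, ?_, ?_, ?_, ?_, ?_, ?_, ?_, ?_, ?_, ?_, ?_, ?_, ?_, ?_, ?_, ?_,
    ?_, ?_, ?_, ?_, ?_, ?_, ?_, ?_, ?_, ?_, ?_, ?_⟩
  · rw [Kop_eq_Kd, Kd_delL hq lA lA, brk_same, pow_neg2]
  · rw [Kop_eq_Kd, Kd_delL hq lA lB, brk_ne hBA,
      show (-(-2:ℤ)) = ((2:ℤ)) by norm_num, pow_pos2]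
  · rw [Kop_eq_Kd, Kd_delR hq lA lA, brk_same, pow_neg2]
  · rw [Kop_eq_Kd, Kd_delR hq lA lB, brk_ne hBA,
      show (-(-2:ℤ)) = ((2:ℤ)) by norm_num, pow_pos2]
  · rw [Kop_eq_Kd, Kd_shL hq lA lA, brk_same, pow_pos2]
  · rw [Kop_eq_Kd, Kd_shL hq lA lB, brk_ne hBA, show ((-2:ℤ)) = (-(2:ℤ)) by norm_num, pow_neg2]
  · rw [Kop_eq_Kd, Kd_shR hq lA lA, brk_same, pow_pos2]
  · rw [Kop_eq_Kd, Kd_shR hq lA lB, brk_ne hBA, show ((-2:ℤ)) = (-(2:ℤ)) by norm_num, pow_neg2]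
  · exact delL_delR lA lA
  · exact delL_delR lB lB
  · exact delL_delR lA lB
  · exact delL_delR lB lA
  · exact shL_shR hq lA lA
  · exact shL_shR hq lB lB
  · exact shL_shR hq lA lB
  · exact shL_shR hq lB lA
  · rw [delL_shR hq lA lB, if_neg hAB, add_zero]
  · rw [delL_shR hq lB lA, if_neg hBA, add_zero]
  · rw [delR_shL hq lA lB, if_neg hAB, add_zero]
  · rw [delR_shL hq lB lA, if_neg hBA, add_zero]
  · rw [delL_shL hq lA lB, if_neg hAB, add_zero, brk_ne hAB,
      show ((-2:ℤ)) = (-(2:ℤ)) by norm_num, pow_neg2]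
  · rw [delL_shL hq lB lA, if_neg hBA, add_zero, brk_ne hBA,
      show ((-2:ℤ)) = (-(2:ℤ)) by norm_num, pow_neg2]
  · rw [delR_shR hq lA lB, if_neg hAB, add_zero, brk_ne hAB,
      show ((-2:ℤ)) = (-(2:ℤ)) by norm_num, pow_neg2]
  · rw [delR_shR hq lB lA, if_neg hBA, add_zero, brk_ne hBA,
      show ((-2:ℤ)) = (-(2:ℤ)) by norm_num, pow_neg2]
  · rw [delL_shL hq lA lA, if_pos rfl, brk_same, pow_pos2, add_sub_cancel_left]
  · rw [delR_shR hq lA lA, if_pos rfl, brk_same, pow_pos2, add_sub_cancel_left]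
  · rw [delL_shL hq lB lB, if_pos rfl, brk_same, pow_pos2, add_sub_cancel_left]
  · rw [delR_shR hq lB lB, if_pos rfl, brk_same, pow_pos2, add_sub_cancel_left]
  · rw [delL_shR hq lA lA, if_pos rfl, Kop_eq_Kd, add_sub_cancel_left]
  · rw [delL_shR hq lB lB, if_pos rfl, Kinv_eq_Kd, add_sub_cancel_left]
  · rw [delR_shL hq lA lA, if_pos rfl, Kop_eq_Kd, add_sub_cancel_left]
  · rw [delR_shL hq lB lB, if_pos rfl, Kinv_eq_Kd, add_sub_cancel_left]
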